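/- Let k ≥ 0 and n ≥ k+2, and let X be a homogeneous and spatially independent random subcomplex of Δₙ with q_k > 0. Then for any two k-simplices τ₁, τ₂ of Δₙ with #(τ₁ ∩ τ₂) = k, one has P(τ₁ ∈ X, τ₂ ∈ X) = q_k² / q_{k−1} > 0, and consequently s_k = r_k / r_{k−1}. -/

import Mathlib

open MeasureTheory Finset Filter


/-- A (sub)complex of the complete complex on the vertex type `V`:
a family of finite subsets closed under taking subsets and containing `∅`. -/
def SComplex {V : Type*} [DecidableEq V] (Y : Finset (Finset V)) : Prop :=
  ∅ ∈ Y ∧ ∀ σ ∈ Y, ∀ τ ∈ σ.powerset, τ ∈ Y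

instance {V : Type*} [DecidableEq V] :
    DecidablePred (fun Y : Finset (Finset V) => SComplex Y) :=
  fun Y => decidable_of_iff (∅ ∈ Y ∧ ∀ σ ∈ Y, ∀ τ ∈ σ.powerset, τ ∈ Y) Iff.rfl

/-- `scount Y m` = number of simplices of `Y` with `m` vertices (i.e. `(m-1)`-simplices);
`f_k(Y) = scount Y (k+1)` and `f_{-1}(Y) = scount Y 0`. -/
def scount {V : Type*} (Y : Finset (Finset V)) (m : ℕ) : ℕ :=
  (Y.filter (fun σ => σ.card = m)).card

/-- Number of external `i`-simplices of `Y` in the complete complex on `Fin n`: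
`i`-simplices `σ ∉ Y` all of whose strict subsets lie in `Y`. -/
def ecount {n : ℕ} (Y : Finset (Finset (Fin n))) (i : ℕ) : ℕ :=
  (Finset.univ.filter (fun σ : Finset (Fin n) =>
    σ.card = i + 1 ∧ σ ∉ Y ∧ ∀ τ ∈ σ.powerset, τ ≠ σ → τ ∈ Y)).card

/-- The weight `∏_{i=0}^{n-1} p_i^{f_i(Y)} (1-p_i)^{e_i(Y)}` of the
multi-parameter random simplicial complex model. -/
noncomputable def mpWeight {n : ℕ} (p : Fin n → ℝ) (Y : Finset (Finset (Fin n))) : ℝ :=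
  ∏ i : Fin n, p i ^ scount Y (i.1 + 1) * (1 - p i) ^ ecount Y i.1

/-- The probability of an event, as a real number. -/
noncomputable def prb {Ω : Type*} [MeasurableSpace Ω] (μ : Measure Ω) (A : Set Ω) : ℝ :=
  (μ A).toReal

/-- Conditional probability `P(A | B)`, as a real number. -/
noncomputable def condP {Ω : Type*} [MeasurableSpace Ω] (μ : Measure Ω) (A B : Set Ω) : ℝ :=
  prb μ (A ∩ B) / prb μ B

/-- A random subcomplex is homogeneous if its distribution is invariant under
every permutation of the vertices. -/
def Homogeneous {n : ℕ} {Ω : Type*} [MeasurableSpace Ω] (μ : Measure Ω)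
    (X : Ω → Finset (Finset (Fin n))) : Prop :=
  ∀ (g : Equiv.Perm (Fin n)) (Y : Finset (Finset (Fin n))),
    prb μ {ω | Finset.image (fun σ => σ.image (⇑g)) (X ω) = Y} = prb μ {ω | X ω = Y}

/-- Spatial independence of a random subcomplex. -/
def SpatInd {n : ℕ} {Ω : Type*} [MeasurableSpace Ω] (μ : Measure Ω)
    (X : Ω → Finset (Finset (Fin n))) : Prop :=
  ∀ Y₁ Y₂ : Finset (Finset (Fin n)), SComplex Y₁ → SComplex Y₂ →
    prb μ {ω | Y₁ ∪ Y₂ ⊆ X ω} * prb μ {ω | Y₁ ∩ Y₂ ⊆ X ω} =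
      prb μ {ω | Y₁ ⊆ X ω} * prb μ {ω | Y₂ ⊆ X ω}

/-- The `k`-dimensional standard simplex `{0, 1, …, k}` in `Fin n`
(for `k = -1` this is the empty simplex). -/
def stdSimp (n : ℕ) (k : ℤ) : Finset (Fin n) :=
  Finset.univ.filter (fun v => (v : ℤ) ≤ k)

/-- The `k`-dimensional simplex `{1, 2, …, k+1}` in `Fin n`,
sharing `k` vertices with `stdSimp n k`. -/
def stdSimp' (n : ℕ) (k : ℕ) : Finset (Fin n) :=
  Finset.univ.filter (fun v => 1 ≤ (v : ℕ) ∧ (v : ℕ) ≤ k + 1)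

/-- The parameter `q_k = P(τ ∈ X)` for a `k`-simplex `τ` (with `q_{-1} = 1`). -/
noncomputable def qpar {n : ℕ} {Ω : Type*} [MeasurableSpace Ω] (μ : Measure Ω)
    (X : Ω → Finset (Finset (Fin n))) (k : ℤ) : ℝ :=
  if k < 0 then 1 else prb μ {ω | stdSimp n k ∈ X ω}

/-- The parameter `r_k = P(σ ∈ X | τ ∈ X)` for a `(k+1)`-simplex `σ` containing the
`k`-simplex `τ`, if `q_k > 0`, and `0` otherwise (with `r_{-1} = q_0`). -/
noncomputable def rpar {n : ℕ} {Ω : Type*} [MeasurableSpace Ω] (μ : Measure Ω)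
    (X : Ω → Finset (Finset (Fin n))) (k : ℤ) : ℝ :=
  if 0 < qpar μ X k then
    condP μ {ω | stdSimp n (k + 1) ∈ X ω} {ω | stdSimp n k ∈ X ω}
  else 0

/-- The parameter `s_k = P(τ₁ ∪ τ₂ ∈ X | τ₁ ∈ X, τ₂ ∈ X)` for `k`-simplices `τ₁, τ₂`
sharing `k` vertices, if `P(τ₁ ∈ X, τ₂ ∈ X) > 0`, and `0` otherwise. -/
noncomputable def spar {n : ℕ} {Ω : Type*} [MeasurableSpace Ω] (μ : Measure Ω)
    (X : Ω → Finset (Finset (Fin n))) (k : ℕ) : ℝ :=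
  if 0 < prb μ ({ω | stdSimp n k ∈ X ω} ∩ {ω | stdSimp' n k ∈ X ω}) then
    condP μ {ω | stdSimp n (k + 1) ∈ X ω}
      ({ω | stdSimp n k ∈ X ω} ∩ {ω | stdSimp' n k ∈ X ω})
  else 0

section Aux
variable {n : ℕ} {Ω : Type*} [MeasurableSpace Ω] (μ : Measure Ω) [IsProbabilityMeasure μ]
  (X : Ω → Finset (Finset (Fin n)))

lemma prb_mono {A B : Set Ω} (h : A ⊆ B) : prb μ A ≤ prb μ B :=
  ENNReal.toReal_mono (measure_ne_top μ B) (measure_mono h)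

lemma prb_univ : prb μ (Set.univ : Set Ω) = 1 := by
  simp [prb]

lemma prb_eq_sum (hmeas : ∀ Y, MeasurableSet {ω | X ω = Y})
    (p : Finset (Finset (Fin n)) → Prop) [DecidablePred p] :
    prb μ {ω | p (X ω)} = ∑ Y ∈ Finset.univ.filter p, prb μ {ω | X ω = Y} := by
  have hset : {ω | p (X ω)} = ⋃ Y ∈ Finset.univ.filter p, {ω | X ω = Y} := by
    ext ω
    simp only [Set.mem_setOf_eq, Set.mem_iUnion, Finset.mem_filter, Finset.mem_univ, true_and]
    exact ⟨fun h => ⟨X ω, h, rfl⟩, fun ⟨Y, hY, h⟩ => h ▸ hY⟩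
  have hdisj : (↑(Finset.univ.filter p) : Set (Finset (Finset (Fin n)))).PairwiseDisjoint
      (fun Y => {ω | X ω = Y}) := by
    intro a _ b _ hab
    simp only [Function.onFun, Set.disjoint_left, Set.mem_setOf_eq]
    intro ω h1 h2
    exact hab (h1 ▸ h2 ▸ rfl)
  rw [hset, prb, measure_biUnion_finset hdisj (fun Y _ => hmeas Y),
    ENNReal.toReal_sum (fun Y _ => measure_ne_top μ _)]
  rfl


lemma prb_image_perm (hmeas : ∀ Y, MeasurableSet {ω | X ω = Y})
    (hhom : Homogeneous μ X) (g : Equiv.Perm (Fin n)) (τ : Finset (Fin n)) :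
    prb μ {ω | τ.image ⇑g ∈ X ω} = prb μ {ω | τ ∈ X ω} := by
  classical
  have hinv : ∀ σ : Finset (Fin n), (σ.image ⇑g).image ⇑g⁻¹ = σ := by
    intro σ
    rw [Finset.image_image]
    simp [Function.comp_def]
  have hinv' : ∀ σ : Finset (Fin n), (σ.image ⇑g⁻¹).image ⇑g = σ := by
    intro σ
    rw [Finset.image_image]
    simp [Function.comp_def]
  have hH : ∀ Z : Finset (Finset (Fin n)), ∀ ω,
      (Finset.image (fun σ => σ.image ⇑g⁻¹) (X ω) = Z) ↔ X ω = Z.image (fun σ => σ.image ⇑g) := by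
    intro Z ω
    constructor
    · intro h
      rw [← h, Finset.image_image]
      simp only [Function.comp_def, hinv', Finset.image_id']
    · intro h
      rw [h, Finset.image_image]
      simp only [Function.comp_def, hinv, Finset.image_id']
  have hh : ∀ Y : Finset (Finset (Fin n)),
      prb μ {ω | X ω = Y.image (fun σ => σ.image ⇑g)} = prb μ {ω | X ω = Y} := by
    intro Y
    have h2 := hhom g⁻¹ Y
    rw [← h2]
    congr 1
    ext ω
    simp only [Set.mem_setOf_eq]
    exact (hH Y ω).symm
  rw [prb_eq_sum μ X hmeas (fun Y => τ.image ⇑g ∈ Y),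
      prb_eq_sum μ X hmeas (fun Y => τ ∈ Y)]
  refine Finset.sum_nbij' (fun Y => Y.image (fun σ => σ.image ⇑g⁻¹))
    (fun Y => Y.image (fun σ => σ.image ⇑g)) ?_ ?_ ?_ ?_ ?_
  · intro Y hY
    simp only [Finset.mem_filter, Finset.mem_univ, true_and] at hY ⊢
    have := Finset.mem_image_of_mem (fun σ => σ.image ⇑g⁻¹) hY
    simpa only [hinv τ] using this
  · intro Y hY
    simp only [Finset.mem_filter, Finset.mem_univ, true_and] at hY ⊢
    exact Finset.mem_image_of_mem _ hY
  · intro Y _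
    simp [Finset.image_image, Function.comp_def, hinv', Finset.image_id']
  · intro Y _
    simp [Finset.image_image, Function.comp_def, hinv, Finset.image_id']
  · intro Y _
    show prb μ {ω | X ω = Y} = prb μ {ω | X ω = Y.image (fun σ => σ.image ⇑g⁻¹)}
    have := hh (Y.image (fun σ => σ.image ⇑g⁻¹))
    simp only [Finset.image_image, Function.comp_def, hinv', Finset.image_id'] at this
    exact this



end Aux

lemma scomplex_powerset {V : Type*} [DecidableEq V] (τ : Finset V) : SComplex τ.powerset :=
  ⟨Finset.empty_mem_powerset τ, fun σ hσ ρ hρ =>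
    Finset.mem_powerset.2 ((Finset.mem_powerset.1 hρ).trans (Finset.mem_powerset.1 hσ))⟩

section Aux2
variable {n : ℕ} {Ω : Type*} [MeasurableSpace Ω] (μ : Measure Ω) [IsProbabilityMeasure μ]
  (X : Ω → Finset (Finset (Fin n)))

lemma exists_perm_image (τ τ' : Finset (Fin n)) (h : τ.card = τ'.card) :
    ∃ g : Equiv.Perm (Fin n), τ.image ⇑g = τ' := by
  classical
  have h1 : Fintype.card {x // x ∈ τ} = Fintype.card {x // x ∈ τ'} := by
    simpa [Fintype.card_coe] using h
  have h2 : Fintype.card {x : Fin n // ¬ x ∈ τ} = Fintype.card {x : Fin n // ¬ x ∈ τ'} := by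
    rw [Fintype.card_subtype_compl, Fintype.card_subtype_compl, h1]
  set e := Fintype.equivOfCardEq h1 with he
  set f := Fintype.equivOfCardEq h2 with hf
  set g : Equiv.Perm (Fin n) :=
    (Equiv.sumCompl (· ∈ τ)).symm.trans ((e.sumCongr f).trans (Equiv.sumCompl (· ∈ τ'))) with hgdef
  refine ⟨g, ?_⟩
  have hgx : ∀ x (hx : x ∈ τ), g x = ↑(e ⟨x, hx⟩) := by
    intro x hx
    have hx' : (Equiv.sumCompl (· ∈ τ)).symm x = Sum.inl ⟨x, hx⟩ := by
      rw [Equiv.symm_apply_eq]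
      exact (Equiv.sumCompl_apply_inl (⟨x, hx⟩ : {a // a ∈ τ})).symm
    simp [hgdef, Equiv.trans_apply, hx']
  have hsub : τ.image ⇑g ⊆ τ' := by
    intro y hy
    obtain ⟨x, hx, rfl⟩ := Finset.mem_image.1 hy
    rw [hgx x hx]
    exact (e ⟨x, hx⟩).2
  apply Finset.eq_of_subset_of_card_le hsub
  rw [Finset.card_image_of_injective τ g.injective, ← h]

lemma stdSimp_subset {j j' : ℤ} (h : j ≤ j') : stdSimp n j ⊆ stdSimp n j' := by
  intro v hv
  simp only [stdSimp, Finset.mem_filter, Finset.mem_univ, true_and] at hv ⊢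
  omega

lemma card_stdSimp (m : ℕ) (hm : m < n) : (stdSimp n (m : ℤ)).card = m + 1 := by
  have hset : stdSimp n (m : ℤ) = Finset.Iic (⟨m, hm⟩ : Fin n) := by
    ext v
    simp only [stdSimp, Finset.mem_filter, Finset.mem_univ, true_and, Finset.mem_Iic,
      Fin.le_def]
    omega
  rw [hset, Fin.card_Iic]

lemma card_stdSimp' (k : ℕ) (hk : k + 1 < n) : (stdSimp' n k).card = k + 1 := by
  have h1 : (1 : ℕ) < n := by omega
  have hset : stdSimp' n k = Finset.Icc (⟨1, h1⟩ : Fin n) ⟨k + 1, hk⟩ := by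
    ext v
    simp only [stdSimp', Finset.mem_filter, Finset.mem_univ, true_and, Finset.mem_Icc,
      Fin.le_def]
  rw [hset, Fin.card_Icc]
  simp

lemma card_inter_std (k : ℕ) (hk : k + 1 < n) :
    (stdSimp n (k : ℤ) ∩ stdSimp' n k).card = k := by
  have h1 : (1 : ℕ) < n := by omega
  have hk' : k < n := by omega
  have hset : stdSimp n (k : ℤ) ∩ stdSimp' n k = Finset.Icc (⟨1, h1⟩ : Fin n) ⟨k, hk'⟩ := by
    ext v
    simp only [stdSimp, stdSimp', Finset.mem_inter, Finset.mem_filter, Finset.mem_univ,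
      true_and, Finset.mem_Icc, Fin.le_def]
    omega
  rw [hset, Fin.card_Icc]
  simp

lemma union_std (k : ℕ) (hk : k + 1 < n) :
    stdSimp n (k : ℤ) ∪ stdSimp' n k = stdSimp n ((k : ℤ) + 1) := by
  ext v
  simp only [stdSimp, stdSimp', Finset.mem_union, Finset.mem_filter, Finset.mem_univ, true_and]
  omega

lemma event_subset (hXc : ∀ ω, SComplex (X ω)) {τ σ : Finset (Fin n)} (h : τ ⊆ σ) :
    {ω | σ ∈ X ω} ⊆ {ω | τ ∈ X ω} :=
  fun ω hω => (hXc ω).2 σ hω τ (Finset.mem_powerset.2 h)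

lemma event_powerset (hXc : ∀ ω, SComplex (X ω)) (τ : Finset (Fin n)) :
    {ω | τ.powerset ⊆ X ω} = {ω | τ ∈ X ω} := by
  ext ω
  simp only [Set.mem_setOf_eq]
  constructor
  · intro h
    exact h (Finset.mem_powerset_self τ)
  · intro h ρ hρ
    exact (hXc ω).2 τ h ρ hρ

lemma event_empty (hXc : ∀ ω, SComplex (X ω)) :
    {ω | (∅ : Finset (Fin n)) ∈ X ω} = Set.univ :=
  Set.eq_univ_of_forall fun ω => (hXc ω).1

lemma qpar_eq_prb (hXc : ∀ ω, SComplex (X ω)) {j : ℤ} (hj : -1 ≤ j) :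
    qpar μ X j = prb μ {ω | stdSimp n j ∈ X ω} := by
  rcases eq_or_lt_of_le hj with h | h
  · rw [qpar, if_pos (by omega)]
    have hstd : stdSimp n j = (∅ : Finset (Fin n)) := by
      apply Finset.eq_empty_of_forall_notMem
      intro v hv
      simp only [stdSimp, Finset.mem_filter, Finset.mem_univ, true_and] at hv
      omega
    rw [hstd, event_empty X hXc, prb_univ μ]
  · rw [qpar, if_neg (by omega)]

lemma prb_mem (hmeas : ∀ Y, MeasurableSet {ω | X ω = Y}) (hXc : ∀ ω, SComplex (X ω))
    (hhom : Homogeneous μ X) (τ : Finset (Fin n)) :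
    prb μ {ω | τ ∈ X ω} = qpar μ X ((τ.card : ℤ) - 1) := by
  rcases Nat.eq_zero_or_pos τ.card with h0 | hpos
  · rw [Finset.card_eq_zero] at h0
    subst h0
    rw [Finset.card_empty, event_empty X hXc, prb_univ μ, qpar, if_pos (by norm_num)]
  · obtain ⟨m, hm⟩ : ∃ m, τ.card = m + 1 := ⟨τ.card - 1, by omega⟩
    have hτn : τ.card ≤ n := by simpa using Finset.card_le_univ τ
    have hmn : m < n := by omega
    have hcard : (stdSimp n (m : ℤ)).card = τ.card := by rw [card_stdSimp m hmn, hm]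
    obtain ⟨g, hg⟩ := exists_perm_image (stdSimp n (m : ℤ)) τ hcard
    have hcast : (τ.card : ℤ) - 1 = (m : ℤ) := by rw [hm]; push_cast; ring
    rw [hcast, ← hg, prb_image_perm μ X hmeas hhom g, qpar, if_neg (by omega)]

lemma rpar_eq (hXc : ∀ ω, SComplex (X ω)) {j : ℤ} (hj : -1 ≤ j) (hq : 0 < qpar μ X j) :
    rpar μ X j = qpar μ X (j + 1) / qpar μ X j := by
  rw [rpar, if_pos hq, condP, qpar_eq_prb μ X hXc hj,
    qpar_eq_prb μ X hXc (by omega : (-1 : ℤ) ≤ j + 1)]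
  congr 1
  exact congrArg (prb μ) (Set.inter_eq_left.2
    (event_subset X hXc (stdSimp_subset (by omega : j ≤ j + 1))))

end Aux2

/-- for a homogeneous and spatially independent random subcomplex with
`q_k > 0`, `P(τ₁ ∈ X, τ₂ ∈ X) = q_k² / q_{k-1} > 0` for `k`-simplices `τ₁, τ₂` sharing
`k` vertices, and consequently `s_k = r_k / r_{k-1}`. -/
theorem spar_eq_rpar_div (n k : ℕ) (hn : k + 2 ≤ n)
    {Ω : Type*} [MeasurableSpace Ω] (μ : Measure Ω) [IsProbabilityMeasure μ]
    (X : Ω → Finset (Finset (Fin n)))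
    (hmeas : ∀ Y, MeasurableSet {ω | X ω = Y})
    (hXc : ∀ ω, SComplex (X ω))
    (hhom : Homogeneous μ X) (hsi : SpatInd μ X)
    (hq : 0 < qpar μ X (k : ℤ)) :
    (∀ τ₁ τ₂ : Finset (Fin n), τ₁.card = k + 1 → τ₂.card = k + 1 → (τ₁ ∩ τ₂).card = k →
      prb μ ({ω | τ₁ ∈ X ω} ∩ {ω | τ₂ ∈ X ω}) =
          qpar μ X (k : ℤ) ^ 2 / qpar μ X ((k : ℤ) - 1) ∧
        0 < prb μ ({ω | τ₁ ∈ X ω} ∩ {ω | τ₂ ∈ X ω})) ∧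
      spar μ X k = rpar μ X (k : ℤ) / rpar μ X ((k : ℤ) - 1) := by
  classical
  have hcast1 : ((k + 1 : ℕ) : ℤ) - 1 = (k : ℤ) := by push_cast; ring
  have part1 : ∀ τ₁ τ₂ : Finset (Fin n), τ₁.card = k + 1 → τ₂.card = k + 1 →
      (τ₁ ∩ τ₂).card = k →
      prb μ ({ω | τ₁ ∈ X ω} ∩ {ω | τ₂ ∈ X ω}) =
          qpar μ X (k : ℤ) ^ 2 / qpar μ X ((k : ℤ) - 1) ∧
        0 < prb μ ({ω | τ₁ ∈ X ω} ∩ {ω | τ₂ ∈ X ω}) := by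
    intro τ₁ τ₂ h1 h2 h12
    have hp1 : prb μ {ω | τ₁ ∈ X ω} = qpar μ X (k : ℤ) := by
      rw [prb_mem μ X hmeas hXc hhom τ₁, h1, hcast1]
    have hp2 : prb μ {ω | τ₂ ∈ X ω} = qpar μ X (k : ℤ) := by
      rw [prb_mem μ X hmeas hXc hhom τ₂, h2, hcast1]
    have hp12 : prb μ {ω | τ₁ ∩ τ₂ ∈ X ω} = qpar μ X ((k : ℤ) - 1) := by
      rw [prb_mem μ X hmeas hXc hhom (τ₁ ∩ τ₂), h12]
    have hs := hsi τ₁.powerset τ₂.powerset (scomplex_powerset τ₁) (scomplex_powerset τ₂)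
    have e1 : {ω | τ₁.powerset ∪ τ₂.powerset ⊆ X ω} = {ω | τ₁ ∈ X ω} ∩ {ω | τ₂ ∈ X ω} := by
      ext ω
      simp only [Set.mem_setOf_eq, Set.mem_inter_iff]
      constructor
      · intro h
        exact ⟨h (Finset.mem_union_left _ (Finset.mem_powerset_self τ₁)),
          h (Finset.mem_union_right _ (Finset.mem_powerset_self τ₂))⟩
      · rintro ⟨ha, hb⟩ ρ hρ
        rcases Finset.mem_union.1 hρ with hρ' | hρ'
        · exact (hXc ω).2 τ₁ ha ρ hρ'
        · exact (hXc ω).2 τ₂ hb ρ hρ'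
    have e2 : {ω | τ₁.powerset ∩ τ₂.powerset ⊆ X ω} = {ω | τ₁ ∩ τ₂ ∈ X ω} := by
      have hpp : τ₁.powerset ∩ τ₂.powerset = (τ₁ ∩ τ₂).powerset := by
        ext ρ
        simp only [Finset.mem_inter, Finset.mem_powerset, Finset.subset_inter_iff]
      rw [hpp, event_powerset X hXc]
    rw [e1, e2, event_powerset X hXc, event_powerset X hXc, hp1, hp2, hp12] at hs
    have hq1pos : 0 < qpar μ X ((k : ℤ) - 1) := by
      have hle : qpar μ X (k : ℤ) ≤ qpar μ X ((k : ℤ) - 1) := by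
        rw [← hp1, ← hp12]
        exact prb_mono μ (event_subset X hXc Finset.inter_subset_left)
      exact lt_of_lt_of_le hq hle
    have heq : prb μ ({ω | τ₁ ∈ X ω} ∩ {ω | τ₂ ∈ X ω}) =
        qpar μ X (k : ℤ) ^ 2 / qpar μ X ((k : ℤ) - 1) := by
      rw [eq_div_iff (ne_of_gt hq1pos), hs]
      ring
    refine ⟨heq, ?_⟩
    rw [heq]
    positivity
  refine ⟨part1, ?_⟩
  have hn1 : k + 1 < n := by omega
  have h1 : (stdSimp n (k : ℤ)).card = k + 1 := card_stdSimp _ (by omega)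
  have h2 : (stdSimp' n k).card = k + 1 := card_stdSimp' _ hn1
  have h12 : (stdSimp n (k : ℤ) ∩ stdSimp' n k).card = k := card_inter_std _ hn1
  obtain ⟨heq, hpos⟩ := part1 _ _ h1 h2 h12
  have hq1pos : 0 < qpar μ X ((k : ℤ) - 1) := by
    have hle : qpar μ X (k : ℤ) ≤ qpar μ X ((k : ℤ) - 1) := by
      rw [qpar_eq_prb μ X hXc (by omega : (-1 : ℤ) ≤ (k : ℤ)),
        qpar_eq_prb μ X hXc (by omega : (-1 : ℤ) ≤ (k : ℤ) - 1)]
      exact prb_mono μ (event_subset X hXc (stdSimp_subset (by omega)))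
    exact lt_of_lt_of_le hq hle
  have hnum : {ω | stdSimp n ((k : ℤ) + 1) ∈ X ω} ∩
      ({ω | stdSimp n (k : ℤ) ∈ X ω} ∩ {ω | stdSimp' n k ∈ X ω}) =
      {ω | stdSimp n ((k : ℤ) + 1) ∈ X ω} := by
    apply Set.inter_eq_left.2
    apply Set.subset_inter
    · exact event_subset X hXc (stdSimp_subset (by omega))
    · refine event_subset X hXc ?_
      rw [← union_std k hn1]
      exact Finset.subset_union_right
  rw [spar, if_pos hpos, condP, heq, hnum,
    ← qpar_eq_prb μ X hXc (by omega : (-1 : ℤ) ≤ (k : ℤ) + 1),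
    rpar_eq μ X hXc (by omega : (-1 : ℤ) ≤ (k : ℤ)) hq,
    rpar_eq μ X hXc (by omega : (-1 : ℤ) ≤ (k : ℤ) - 1) hq1pos,
    (by ring : (k : ℤ) - 1 + 1 = (k : ℤ))]
  have hk0 : qpar μ X (k : ℤ) ≠ 0 := ne_of_gt hq
  have hk1 : qpar μ X ((k : ℤ) - 1) ≠ 0 := ne_of_gt hq1pos
  field_simp
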